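/- Let V be a finite-dimensional real inner product space, W : Fin m → V a linearly independent family with Gram matrix M (entries M_{αβ} = ⟨W_α,W_β⟩, inverse entries m_{αβ}), and n ∈ V with n ∉ span{W_1,…,W_m}; set D := ⟨n,n⟩ − Σ_{α,β} m_{αβ}⟨n,W_α⟩⟨n,W_β⟩ (so D ≠ 0). For arbitrary v ∈ V define c := ⟨n,v⟩ − Σ_{α,β} m_{αβ}⟨n,W_β⟩⟨W_α,v⟩, ε := −2c/D, λ_k := (2c/D)·Σ_ℓ m_{kℓ}⟨n,W_ℓ⟩, and δ(v) := v + Σ_k λ_k W_k + ε·n. Then ⟨W_α, δ(v)⟩ = ⟨W_α, v⟩ for every α; that is, the global nonholonomic impact map leaves all constraint momentum functions P(W^α) invariant. -/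
import Mathlib

open scoped RealInnerProductSpace

lemma gram_isUnit {V : Type*} [NormedAddCommGroup V] [InnerProductSpace ℝ V]
    {m : ℕ} (W : Fin m → V) (hW : LinearIndependent ℝ W)
    (M : Matrix (Fin m) (Fin m) ℝ) (hM : ∀ α β, M α β = ⟪W α, W β⟫) :
    IsUnit M := by
  rw [← Matrix.mulVec_injective_iff_isUnit]
  intro x y hxy
  have key : ∀ z : Fin m → ℝ, M.mulVec z = 0 → z = 0 := by
    intro z hz
    have h0 : (∑ i, z i • W i) = 0 := by
      have hin : ⟪∑ i, z i • W i, ∑ j, z j • W j⟫ = 0 := by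
        rw [inner_sum]
        have : ∀ j ∈ Finset.univ, ⟪∑ i, z i • W i, z j • W j⟫ = z j * (M.mulVec z j) := by
          intro j _
          rw [sum_inner, Matrix.mulVec, dotProduct, Finset.mul_sum]
          apply Finset.sum_congr rfl
          intro i _
          rw [real_inner_smul_left, real_inner_smul_right, hM, real_inner_comm]
          ring
        rw [Finset.sum_congr rfl this]
        simp [hz]
      exact inner_self_eq_zero.mp hin
    funext i
    exact linearIndependent_iff'.mp hW Finset.univ z h0 i (Finset.mem_univ i)
  have : M.mulVec (x - y) = 0 := by
    rw [Matrix.mulVec_sub, hxy, sub_self]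
  have := key _ this
  exact sub_eq_zero.mp this

/-- The global nonholonomic impact map (Remark 3.3, eq. (16) of the paper) leaves
all constraint momentum functions invariant: `⟪W α, δ v⟫ = ⟪W α, v⟫`. -/
theorem stmt5 {V : Type*} [NormedAddCommGroup V] [InnerProductSpace ℝ V]
    [FiniteDimensional ℝ V]
    {m : ℕ} (W : Fin m → V) (hW : LinearIndependent ℝ W)
    (M : Matrix (Fin m) (Fin m) ℝ) (hM : ∀ α β, M α β = ⟪W α, W β⟫)
    (n : V) (hn : n ∉ Submodule.span ℝ (Set.range W))
    (D : ℝ)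
    (hD : D = ⟪n, n⟫ - ∑ α, ∑ β, M⁻¹ α β * (⟪n, W α⟫ * ⟪n, W β⟫))
    (v : V) (c : ℝ)
    (hc : c = ⟪n, v⟫ - ∑ α, ∑ β, M⁻¹ α β * (⟪n, W β⟫ * ⟪W α, v⟫))
    (ε : ℝ) (hε : ε = -2 * c / D)
    (lam : Fin m → ℝ)
    (hlam : ∀ k, lam k = (2 * c / D) * ∑ l, M⁻¹ k l * ⟪n, W l⟫)
    (δv : V) (hδ : δv = v + (∑ k, lam k • W k) + ε • n) :
    ∀ α, ⟪W α, δv⟫ = ⟪W α, v⟫ := by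
  intro α
  have hMu := gram_isUnit W hW M hM
  have hMM : M * M⁻¹ = 1 := Matrix.mul_nonsing_inv M
    ((Matrix.isUnit_iff_isUnit_det M).mp hMu)
  have hkey : ∑ k, lam k * ⟪W α, W k⟫ = (2 * c / D) * ⟪n, W α⟫ := by
    have h1 : ∑ k, lam k * ⟪W α, W k⟫
        = ∑ k, ∑ l, (2 * c / D) * (M α k * M⁻¹ k l * ⟪n, W l⟫) := by
      simp only [hlam, ← hM]
      apply Finset.sum_congr rfl
      intro k _
      rw [Finset.mul_sum, Finset.sum_mul]
      apply Finset.sum_congr rfl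
      intro l _
      ring
    rw [h1, Finset.sum_comm]
    have h2 : ∀ l, ∑ k, (2 * c / D) * (M α k * M⁻¹ k l * ⟪n, W l⟫)
        = (2 * c / D) * ((if α = l then (1:ℝ) else 0) * ⟪n, W l⟫) := by
      intro l
      rw [← Finset.mul_sum]
      congr 1
      rw [← Finset.sum_mul, ← Matrix.mul_apply, hMM, Matrix.one_apply]
    simp [h2]
  rw [hδ]
  rw [inner_add_right, inner_add_right, inner_sum]
  simp only [real_inner_smul_right, hkey, hε]
  rw [real_inner_comm (W α) n]
  ring
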